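/- Let P, P' be polytopes in ℝ^d with vertex set of P contained in the vertex set of P', and suppose d_H(P, B_1(0)) ≤ ε ≤ 1/36. Then d_H(P', B_1(0)) ≤ 6√ε. -/

import Mathlib

open Metric Set
open scoped RealInnerProductSpace

set_option maxHeartbeats 1000000

/-- Arithmetic helper. -/
lemma aux_poly_ineq (s δ : ℝ) (hs0 : 0 ≤ s) (hs6 : s ≤ 1/6) (hδ : 6*s < δ) :
    4*s^2*(2+δ-s^2) ≤ (1-s^2)^2*(δ+s^2) := by
  nlinarith [mul_nonneg hs0 hs0, sq_nonneg s, sq_nonneg (s*δ), mul_nonneg (mul_nonneg hs0 hs0) hs0,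
    mul_nonneg hs0 (le_trans (by positivity) (le_of_lt hδ)), sq_nonneg (1 - s^2), mul_nonneg (sub_nonneg.2 hs6) hs0]

/-- **Polytopes on the vertices of a nearly spherical polytope stay near the ball.**
Let `P, P'` be polytopes in `ℝ^d` such that every vertex (extreme point) of `P` is a vertex of
`P'`, and suppose the Hausdorff distance of `P` to the closed unit ball is at most `ε ≤ 1/36`.
Then the Hausdorff distance of `P'` to the closed unit ball is at most `6√ε`. -/
theorem hausdorffDist_le_of_vertices_subset {d : ℕ}
    (Vt Vt' : Finset (EuclideanSpace ℝ (Fin d))) (hVt : Vt.Nonempty)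
    (P P' : Set (EuclideanSpace ℝ (Fin d)))
    (hP : P = convexHull ℝ (Vt : Set (EuclideanSpace ℝ (Fin d))))
    (hP' : P' = convexHull ℝ (Vt' : Set (EuclideanSpace ℝ (Fin d))))
    (hsub : Set.extremePoints ℝ P ⊆ Set.extremePoints ℝ P')
    (ε : ℝ) (hε : ε ≤ 1 / 36)
    (hHD : Metric.hausdorffDist P (Metric.closedBall 0 1) ≤ ε) :
    Metric.hausdorffDist P' (Metric.closedBall 0 1) ≤ 6 * Real.sqrt ε := by
  set s := Real.sqrt ε with hs_def
  have hε0 : 0 ≤ ε := le_trans Metric.hausdorffDist_nonneg hHD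
  have hs0 : 0 ≤ s := Real.sqrt_nonneg ε
  have hsε : s^2 = ε := Real.sq_sqrt hε0
  have hs6 : s ≤ 1/6 := by
    have h1 : Real.sqrt ε ≤ Real.sqrt (1/36) := Real.sqrt_le_sqrt hε
    have h2 : Real.sqrt (1/36) = 1/6 := by
      rw [show (1/36 : ℝ) = (1/6)^2 by norm_num, Real.sqrt_sq (by norm_num)]
    rw [h2] at h1; exact h1
  -- basic facts about P and P'
  have hPcomp : IsCompact P := hP ▸ Vt.finite_toSet.isCompact_convexHull ℝ
  have hPconv : Convex ℝ P := hP ▸ convex_convexHull ℝ _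
  have hPne : P.Nonempty := by
    rw [hP]
    exact (convexHull_nonempty_iff).2 (by exact_mod_cast hVt.to_set)
  have hP'comp : IsCompact P' := hP' ▸ Vt'.finite_toSet.isCompact_convexHull ℝ
  have hP'conv : Convex ℝ P' := hP' ▸ convex_convexHull ℝ _
  -- Krein–Milman for P and P'
  have hKM : convexHull ℝ (Set.extremePoints ℝ P) = P := by
    have h1 := closure_convexHull_extremePoints hPcomp hPconv
    have hfin : (Set.extremePoints ℝ P).Finite :=
      Vt.finite_toSet.subset (by rw [hP]; exact extremePoints_convexHull_subset)
    rwa [(hfin.isClosed_convexHull ℝ).closure_eq] at h1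
  have hKM' : convexHull ℝ (Set.extremePoints ℝ P') = P' := by
    have h1 := closure_convexHull_extremePoints hP'comp hP'conv
    have hfin : (Set.extremePoints ℝ P').Finite :=
      Vt'.finite_toSet.subset (by rw [hP']; exact extremePoints_convexHull_subset)
    rwa [(hfin.isClosed_convexHull ℝ).closure_eq] at h1
  have hPP' : P ⊆ P' := by
    rw [← hKM]
    exact convexHull_min (hsub.trans extremePoints_subset) hP'conv
  have hBne : (Metric.closedBall (0:EuclideanSpace ℝ (Fin d)) 1).Nonempty := ⟨0, by simp⟩
  have hedist : EMetric.hausdorffEdist P (Metric.closedBall (0:EuclideanSpace ℝ (Fin d)) 1) ≠ ⊤ :=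
    Metric.hausdorffEdist_ne_top_of_nonempty_of_bounded hPne hBne hPcomp.isBounded
      Metric.isBounded_closedBall
  -- points of P have norm at most 1 + ε
  have hPnorm : ∀ x ∈ P, ‖x‖ ≤ 1 + ε := by
    intro x hx
    have h1 : Metric.infDist x (Metric.closedBall (0:EuclideanSpace ℝ (Fin d)) 1) ≤ ε :=
      le_trans (Metric.infDist_le_hausdorffDist_of_mem hx hedist) hHD
    obtain ⟨y, hy, hxy⟩ := (isCompact_closedBall (0:EuclideanSpace ℝ (Fin d)) 1).exists_infDist_eq_dist hBne x
    have h2 : ‖x‖ - ‖y‖ ≤ dist x y := by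
      rw [dist_eq_norm]; exact (norm_sub_norm_le x y)
    have hy1 : ‖y‖ ≤ 1 := mem_closedBall_zero_iff.1 hy
    rw [← hxy] at h2
    linarith
  -- every point of the ball is ε-close to P
  have hBP : ∀ y ∈ Metric.closedBall (0:EuclideanSpace ℝ (Fin d)) 1, Metric.infDist y P ≤ ε := by
    intro y hy
    have h1 := Metric.infDist_le_hausdorffDist_of_mem hy
      (by rw [Metric.hausdorffEDist_comm]; exact hedist)
    rw [Metric.hausdorffDist_comm] at h1
    exact h1.trans hHD
  -- the inner ball is inside P
  have hball : Metric.closedBall (0:EuclideanSpace ℝ (Fin d)) (1-ε) ⊆ P := by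
    intro x hx
    by_contra hxP
    obtain ⟨f, c, hfc, hcx⟩ := geometric_hahn_banach_closed_point hPconv hPcomp.isClosed hxP
    set a : EuclideanSpace ℝ (Fin d) := (InnerProductSpace.toDual ℝ (EuclideanSpace ℝ (Fin d))).symm f with ha
    have hfa : ∀ y : EuclideanSpace ℝ (Fin d), ⟪a, y⟫ = f y := fun y => by
      rw [ha]; exact InnerProductSpace.toDual_symm_apply
    have hna : ‖a‖ = ‖f‖ := by
      rw [ha]
      exact (InnerProductSpace.toDual ℝ (EuclideanSpace ℝ (Fin d))).symm.norm_map f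
    obtain ⟨p0, hp0⟩ := id hPne
    have ha0 : a ≠ 0 := by
      intro h
      have h1 := hfc p0 hp0
      have h2 : f p0 = ⟪a, p0⟫ := (hfa p0).symm
      have h3 : f x = ⟪a, x⟫ := (hfa x).symm
      rw [h2, h, inner_zero_left] at h1
      rw [h3, h, inner_zero_left] at hcx
      linarith
    have hna0 : 0 < ‖a‖ := norm_pos_iff.2 ha0
    set w : EuclideanSpace ℝ (Fin d) := ‖a‖⁻¹ • a with hw
    have hnw : ‖w‖ = 1 := by
      rw [hw, norm_smul, norm_inv, norm_norm, inv_mul_cancel₀ (ne_of_gt hna0)]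
    have hwB : w ∈ Metric.closedBall (0:EuclideanSpace ℝ (Fin d)) 1 := mem_closedBall_zero_iff.2 (le_of_eq hnw)
    obtain ⟨p, hpP, hpd⟩ := hPcomp.exists_infDist_eq_dist hPne w
    have hdwp : dist w p ≤ ε := by rw [← hpd]; exact hBP w hwB
    have hfw : ⟪a, w⟫ = ‖a‖ := by
      rw [hw, real_inner_smul_right, real_inner_self_eq_norm_sq]
      field_simp
    have hfx : f x ≤ ‖a‖ * (1-ε) := by
      have h1 : f x ≤ ‖f‖ * ‖x‖ := le_trans (le_abs_self _) (f.le_opNorm x)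
      have h2 : ‖x‖ ≤ 1 - ε := mem_closedBall_zero_iff.1 hx
      have := mul_le_mul_of_nonneg_left h2 (norm_nonneg f)
      rw [← hna] at *
      nlinarith [norm_nonneg a]
    have hfp : f p < ‖a‖ * (1-ε) := lt_of_lt_of_le (lt_trans (hfc p hpP) hcx) hfx
    have key : ⟪a, w - p⟫ ≤ ‖a‖ * dist w p := by
      calc ⟪a, w - p⟫ ≤ ‖a‖ * ‖w - p‖ := real_inner_le_norm a (w - p)
        _ = ‖a‖ * dist w p := by rw [dist_eq_norm]
    rw [inner_sub_right, hfw, hfa] at key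
    nlinarith
  -- key claim: extreme points of P' have norm at most 1 + 6√ε
  have hclaim : ∀ v ∈ Set.extremePoints ℝ P', ‖v‖ ≤ 1 + 6*s := by
    intro v hv
    by_contra hlt
    push_neg at hlt
    set δ := ‖v‖ - 1 with hδ_def
    have hδ6 : 6*s < δ := by simp only [hδ_def]; linarith
    have hnv : ‖v‖ = 1 + δ := by rw [hδ_def]; ring
    have hv0 : v ≠ 0 := by
      intro h; rw [h, norm_zero] at hlt; nlinarith
    have hnv0 : 0 < ‖v‖ := norm_pos_iff.2 hv0
    set u : EuclideanSpace ℝ (Fin d) := ‖v‖⁻¹ • v with hu_def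
    have hnu : ‖u‖ = 1 := by
      rw [hu_def, norm_smul, norm_inv, norm_norm, inv_mul_cancel₀ (ne_of_gt hnv0)]
    have huB : u ∈ Metric.closedBall (0:EuclideanSpace ℝ (Fin d)) 1 := mem_closedBall_zero_iff.2 (le_of_eq hnu)
    obtain ⟨p, hpP, hpd⟩ := hPcomp.exists_infDist_eq_dist hPne u
    have hdup : dist u p ≤ ε := by rw [← hpd]; exact hBP u huB
    have hup : (1:ℝ) - ε ≤ ⟪u, p⟫ := by
      have h1 : ⟪u, u - p⟫ ≤ ‖u‖ * ‖u - p‖ := real_inner_le_norm u (u - p)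
      rw [inner_sub_right, real_inner_self_eq_norm_sq, hnu] at h1
      rw [dist_eq_norm] at hdup
      nlinarith
    -- get an extreme point of P far in direction u
    obtain ⟨q, hqP, hqip⟩ : ∃ q ∈ Set.extremePoints ℝ P, ⟪u, p⟫ ≤ ⟪u, q⟫ := by
      by_contra h
      push_neg at h
      have hlin : IsLinearMap ℝ (fun w : EuclideanSpace ℝ (Fin d) => ⟪u, w⟫) :=
        ⟨fun x y => inner_add_right u x y, fun c x => real_inner_smul_right u x c⟩
      have hsub2 : P ⊆ {w : EuclideanSpace ℝ (Fin d) | ⟪u, w⟫ < ⟪u, p⟫} := by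
        rw [← hKM]
        exact convexHull_min (fun w hw => h w hw) (convex_halfSpace_lt hlin _)
      have := hsub2 hpP
      simp only [Set.mem_setOf_eq] at this
      exact lt_irrefl _ this
    have hq1 : (1:ℝ) - ε ≤ ⟪u, q⟫ := le_trans hup hqip
    have hqn : ‖q‖ ≤ 1 + ε := hPnorm q (extremePoints_subset hqP)
    have hqv : (1+δ)*(1-ε) ≤ ⟪q, v⟫ := by
      have h1 : ⟪u, q⟫ = ‖v‖⁻¹ * ⟪v, q⟫ := by rw [hu_def, real_inner_smul_left]
      have h2 : ⟪v, q⟫ = ⟪q, v⟫ := real_inner_comm q v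
      rw [h1, h2] at hq1
      have h3 := mul_le_mul_of_nonneg_left hq1 (le_of_lt hnv0)
      rw [← mul_assoc, mul_inv_cancel₀ (ne_of_gt hnv0), one_mul, hnv] at h3
      linarith
    set D := 2 + δ - ε with hD_def
    have hD0 : 0 < D := by nlinarith
    set t := (1-ε)/D with ht_def
    have htD : t * D = 1 - ε := by rw [ht_def]; field_simp
    have ht0 : 0 < t := div_pos (by nlinarith) hD0
    have ht1 : t < 1 := by
      rw [ht_def, div_lt_one hD0]; nlinarith
    -- the point z
    set z : EuclideanSpace ℝ (Fin d) := (1-t)⁻¹ • (q - t • v) with hz_def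
    have hzn : ‖z‖ ≤ 1 - ε := by
      have hsq : ‖q - t • v‖^2 ≤ ((1-t)*(1-ε))^2 := by
        rw [norm_sub_sq_real, real_inner_smul_right, norm_smul, Real.norm_eq_abs,
          abs_of_pos ht0, hnv]
        have hq2 : ‖q‖^2 ≤ (1+ε)^2 := by nlinarith [norm_nonneg q]
        have htqv : t*((1+δ)*(1-ε)) ≤ t * ⟪q, v⟫ :=
          mul_le_mul_of_nonneg_left hqv (le_of_lt ht0)
        -- main polynomial inequality, after multiplying out by D^2
        have hmain := aux_poly_ineq s δ hs0 hs6 hδ6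
        rw [hsε] at hmain
        have hstep : (1+ε)^2 - 2*(t*((1+δ)*(1-ε))) + (t*(1+δ))^2 ≤ ((1-t)*(1-ε))^2 := by
          have hD0' : (0:ℝ) < 2+δ-ε := by rw [← hD_def]; exact hD0
          have hnum : (0:ℝ) ≤ (2+δ-ε) * ((1-ε)^2*(δ+ε) - 4*ε*(2+δ-ε)) := by
            apply mul_nonneg hD0'.le
            linarith [hmain]
          have expand : ((1-t)*(1-ε))^2 - ((1+ε)^2 - 2*(t*((1+δ)*(1-ε))) + (t*(1+δ))^2)
              = ((2+δ-ε) * ((1-ε)^2*(δ+ε) - 4*ε*(2+δ-ε)))/(2+δ-ε)^2 := by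
            rw [ht_def, hD_def]
            field_simp
            ring
          have hpos : (0:ℝ) ≤ ((2+δ-ε) * ((1-ε)^2*(δ+ε) - 4*ε*(2+δ-ε)))/(2+δ-ε)^2 :=
            div_nonneg hnum (sq_nonneg _)
          rw [← expand] at hpos
          linarith
        linarith [hq2, htqv, hstep]
      have h1 : ‖q - t • v‖ ≤ (1-t)*(1-ε) := by
        have h2 : (0:ℝ) ≤ (1-t)*(1-ε) := by nlinarith
        nlinarith [norm_nonneg (q - t • v)]
      rw [hz_def, norm_smul, norm_inv, Real.norm_eq_abs, abs_of_pos (by linarith : (0:ℝ) < 1 - t)]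
      rw [inv_mul_le_iff₀ (by linarith : (0:ℝ) < 1 - t)]
      linarith [h1]
    have hzP' : z ∈ P' := hPP' (hball (mem_closedBall_zero_iff.2 hzn))
    have hvP' : v ∈ P' := hv.1
    have hseg : q ∈ openSegment ℝ v z := by
      refine ⟨t, 1-t, ht0, by linarith, by ring, ?_⟩
      rw [hz_def, smul_smul, mul_inv_cancel₀ (by linarith : (1:ℝ) - t ≠ 0), one_smul]
      abel
    have hqext := mem_extremePoints.1 (hsub hqP)
    have hvq := (hqext.2 v hvP' z hzP' hseg).1
    rw [← hvq] at hqn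
    rw [hnv] at hqn
    nlinarith
  -- assemble the Hausdorff distance bound
  have hP'sub : P' ⊆ Metric.closedBall (0:EuclideanSpace ℝ (Fin d)) (1+6*s) := by
    rw [← hKM']
    exact convexHull_min (fun v hv => mem_closedBall_zero_iff.2 (hclaim v hv))
      (convex_closedBall _ _)
  apply Metric.hausdorffDist_le_of_infDist (by positivity)
  · intro x hx
    have hxn : ‖x‖ ≤ 1 + 6*s := mem_closedBall_zero_iff.1 (hP'sub hx)
    by_cases h1 : ‖x‖ ≤ 1
    · have : x ∈ Metric.closedBall (0:EuclideanSpace ℝ (Fin d)) 1 := mem_closedBall_zero_iff.2 h1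
      rw [Metric.infDist_zero_of_mem this]
      positivity
    · push_neg at h1
      have hx0 : (0:ℝ) < ‖x‖ := by linarith
      set y : EuclideanSpace ℝ (Fin d) := ‖x‖⁻¹ • x with hy_def
      have hny : ‖y‖ = 1 := by
        rw [hy_def, norm_smul, norm_inv, norm_norm, inv_mul_cancel₀ (ne_of_gt hx0)]
      have hyB : y ∈ Metric.closedBall (0:EuclideanSpace ℝ (Fin d)) 1 := mem_closedBall_zero_iff.2 (le_of_eq hny)
      have hdxy : dist x y = ‖x‖ - 1 := by
        have hinv : ‖x‖⁻¹ ≤ 1 := by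
          rw [inv_le_one₀ hx0]; linarith
        have hxe : x - ‖x‖⁻¹ • x = (1 - ‖x‖⁻¹) • x := by
          rw [sub_smul, one_smul]
        rw [dist_eq_norm, hy_def, hxe, norm_smul, Real.norm_eq_abs,
          abs_of_nonneg (by linarith : (0:ℝ) ≤ 1 - ‖x‖⁻¹), sub_mul, one_mul,
          inv_mul_cancel₀ (ne_of_gt hx0)]
      calc Metric.infDist x (Metric.closedBall (0:EuclideanSpace ℝ (Fin d)) 1) ≤ dist x y :=
            Metric.infDist_le_dist_of_mem hyB
        _ = ‖x‖ - 1 := hdxy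
        _ ≤ 6*s := by linarith
  · intro y hy
    calc Metric.infDist y P' ≤ Metric.infDist y P :=
          Metric.infDist_le_infDist_of_subset hPP' hPne
      _ ≤ ε := hBP y hy
      _ ≤ 6*s := by nlinarith
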